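/- Let A be an m×m real symmetric positive definite matrix and define G_A = max_{i≠j} |A_{ii} − A_{ij}|/|i−j|. Let Aₙ be the rank-n approximation from n steps of the Cholesky decomposition with complete pivoting (each pivot index maximizes the diagonal of the current residual). Then for 1 < n ≤ m, max_{i,j} |(A − Aₙ)_{ij}| ≤ 4(m−1)G_A/(n−1). -/

import Mathlib

open Matrix


/-- One pivoted Cholesky step on a matrix at pivot index `p`. -/
noncomputable def cholStepM {m : ℕ} (R : Matrix (Fin m) (Fin m) ℝ) (p : Fin m) :
    Matrix (Fin m) (Fin m) ℝ :=
  Matrix.of fun i j => R i j - R i p * R p j / R p p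

/-- The residual of the pivoted Cholesky algorithm on a matrix after pivoting at the
indices of the list `ps` (in order). -/
noncomputable def cholResidM {m : ℕ} (A : Matrix (Fin m) (Fin m) ℝ)
    (ps : List (Fin m)) : Matrix (Fin m) (Fin m) ℝ :=
  ps.foldl cholStepM A

lemma cholStepM_qf {m : ℕ} (R : Matrix (Fin m) (Fin m) ℝ) (p : Fin m) (x : Fin m → ℝ) :
    x ⬝ᵥ (cholStepM R p).mulVec x =
      x ⬝ᵥ R.mulVec x - (∑ i, x i * R i p) * (∑ j, R p j * x j) / R p p := by
  simp only [cholStepM, Matrix.of_apply, dotProduct, mulVec, Finset.sum_sub_distrib, mul_sub,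
    sub_mul, Finset.sum_mul, Finset.mul_sum, Finset.sum_div]
  congr 1
  rw [Finset.sum_comm]
  congr 1; ext j; congr 1; ext i; ring

lemma psd_qf {m : ℕ} {R : Matrix (Fin m) (Fin m) ℝ} (h : R.PosSemidef) (x : Fin m → ℝ) :
    0 ≤ x ⬝ᵥ R.mulVec x := by simpa using h.dotProduct_mulVec_nonneg x

lemma psd_apply_symm {m : ℕ} {R : Matrix (Fin m) (Fin m) ℝ} (h : R.PosSemidef) (i j : Fin m) :
    R i j = R j i := by
  simpa using (h.1.apply i j).symm

lemma dot_mulVec_symm {m : ℕ} {R : Matrix (Fin m) (Fin m) ℝ} (h : R.PosSemidef)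
    (x y : Fin m → ℝ) : x ⬝ᵥ R.mulVec y = y ⬝ᵥ R.mulVec x := by
  simp only [dotProduct, mulVec, Finset.mul_sum]
  rw [Finset.sum_comm]
  congr 1; ext i; congr 1; ext j; rw [psd_apply_symm h j i]; ring

lemma psd_cs {m : ℕ} {R : Matrix (Fin m) (Fin m) ℝ} (h : R.PosSemidef) (x y : Fin m → ℝ) :
    (x ⬝ᵥ R.mulVec y) ^ 2 ≤ (x ⬝ᵥ R.mulVec x) * (y ⬝ᵥ R.mulVec y) := by
  have key : ∀ t : ℝ, 0 ≤ (y ⬝ᵥ R.mulVec y) * (t * t) + (2 * (x ⬝ᵥ R.mulVec y)) * t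
      + (x ⬝ᵥ R.mulVec x) := by
    intro t
    have h0 := psd_qf h (x + t • y)
    have e1 : (x + t • y) ⬝ᵥ R.mulVec (x + t • y)
        = (x ⬝ᵥ R.mulVec x) + t * (x ⬝ᵥ R.mulVec y) + t * (y ⬝ᵥ R.mulVec x)
          + t * t * (y ⬝ᵥ R.mulVec y) := by
      simp [mulVec_add, mulVec_smul, dotProduct_add, add_dotProduct, dotProduct_smul,
        smul_dotProduct, smul_eq_mul]
      ring
    rw [e1, dot_mulVec_symm h y x] at h0
    nlinarith [h0]
  have hd := discrim_le_zero key
  rw [discrim] at hd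
  nlinarith [hd]

lemma qf_single {m : ℕ} (R : Matrix (Fin m) (Fin m) ℝ) (i j : Fin m) :
    (Pi.single i 1 : Fin m → ℝ) ⬝ᵥ R.mulVec (Pi.single j 1) = R i j := by
  simp [mulVec_single, single_dotProduct]

lemma psd_entry_sq_le {m : ℕ} {R : Matrix (Fin m) (Fin m) ℝ} (h : R.PosSemidef) (i j : Fin m) :
    (R i j) ^ 2 ≤ R i i * R j j := by
  have := psd_cs h (Pi.single i 1) (Pi.single j 1)
  simpa [qf_single] using this

lemma psd_diag_nonneg {m : ℕ} {R : Matrix (Fin m) (Fin m) ℝ} (h : R.PosSemidef) (i : Fin m) :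
    0 ≤ R i i := by
  have := psd_qf h (Pi.single i 1); simpa [qf_single] using this

lemma cholStepM_qf' {m : ℕ} {R : Matrix (Fin m) (Fin m) ℝ} (h : R.PosSemidef) (p : Fin m)
    (x : Fin m → ℝ) :
    x ⬝ᵥ (cholStepM R p).mulVec x =
      x ⬝ᵥ R.mulVec x - (x ⬝ᵥ R.mulVec (Pi.single p 1)) ^ 2 / R p p := by
  rw [cholStepM_qf]
  have e1 : (∑ i, x i * R i p) = x ⬝ᵥ R.mulVec (Pi.single p 1) := by
    simp [mulVec_single, dotProduct]
  have e2 : (∑ j, R p j * x j) = x ⬝ᵥ R.mulVec (Pi.single p 1) := by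
    rw [e1.symm]; congr 1; ext j; rw [psd_apply_symm h p j]; ring
  rw [e1, e2]; ring_nf

lemma cholStepM_qf_nonneg {m : ℕ} {R : Matrix (Fin m) (Fin m) ℝ} (h : R.PosSemidef) (p : Fin m)
    (x : Fin m → ℝ) : 0 ≤ x ⬝ᵥ (cholStepM R p).mulVec x := by
  rw [cholStepM_qf' h]
  have hcs := psd_cs h x (Pi.single p 1)
  rw [qf_single] at hcs
  rcases eq_or_lt_of_le (psd_diag_nonneg h p) with h0 | h0
  · rw [← h0, div_zero]; simpa using psd_qf h x
  · rw [sub_nonneg, div_le_iff₀ h0]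
    exact hcs

lemma cholStepM_qf_le {m : ℕ} {R : Matrix (Fin m) (Fin m) ℝ} (h : R.PosSemidef) (p : Fin m)
    (x : Fin m → ℝ) : x ⬝ᵥ (cholStepM R p).mulVec x ≤ x ⬝ᵥ R.mulVec x := by
  rw [cholStepM_qf' h]
  have : 0 ≤ (x ⬝ᵥ R.mulVec (Pi.single p 1)) ^ 2 / R p p :=
    div_nonneg (sq_nonneg _) (psd_diag_nonneg h p)
  linarith

lemma cholStepM_psd {m : ℕ} {R : Matrix (Fin m) (Fin m) ℝ} (h : R.PosSemidef) (p : Fin m) :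
    (cholStepM R p).PosSemidef := by
  refine Matrix.PosSemidef.of_dotProduct_mulVec_nonneg ?_ ?_
  · ext i j
    simp only [conjTranspose_apply, cholStepM, Matrix.of_apply, star_trivial]
    rw [psd_apply_symm h j i, psd_apply_symm h j p, psd_apply_symm h p i]
    ring
  · intro x
    simpa using cholStepM_qf_nonneg h p x

lemma cholStepM_diag_le {m : ℕ} {R : Matrix (Fin m) (Fin m) ℝ} (h : R.PosSemidef) (p i : Fin m) :
    cholStepM R p i i ≤ R i i := by
  simp only [cholStepM, Matrix.of_apply]
  rw [psd_apply_symm h p i]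
  have : 0 ≤ R i p * R i p / R p p := div_nonneg (mul_self_nonneg _) (psd_diag_nonneg h p)
  linarith

lemma cholStepM_col_zero {m : ℕ} {R : Matrix (Fin m) (Fin m) ℝ} (h : R.PosSemidef) (p i : Fin m) :
    cholStepM R p i p = 0 := by
  simp only [cholStepM, Matrix.of_apply]
  rcases eq_or_ne (R p p) 0 with h0 | h0
  · have := psd_entry_sq_le h i p
    rw [h0, mul_zero] at this
    have : R i p = 0 := by nlinarith [sq_nonneg (R i p)]
    simp [this, h0]
  · rw [mul_div_assoc, div_self h0]; ring

lemma cholStepM_col_zero' {m : ℕ} {R : Matrix (Fin m) (Fin m) ℝ} (p : Fin m)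
    (hz : ∀ i, R i p = 0) (q i : Fin m) : cholStepM R q i p = 0 := by
  simp [cholStepM, hz i, hz q]

lemma foldl_psd {m : ℕ} (ps : List (Fin m)) :
    ∀ {R : Matrix (Fin m) (Fin m) ℝ}, R.PosSemidef → (ps.foldl cholStepM R).PosSemidef := by
  induction ps with
  | nil => intro R h; simpa using h
  | cons q t ih => intro R h; exact ih (cholStepM_psd h q)

lemma foldl_qf_le {m : ℕ} (ps : List (Fin m)) :
    ∀ {R : Matrix (Fin m) (Fin m) ℝ}, R.PosSemidef → ∀ x : Fin m → ℝ,
      x ⬝ᵥ (ps.foldl cholStepM R).mulVec x ≤ x ⬝ᵥ R.mulVec x := by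
  induction ps with
  | nil => intro R _ x; simp
  | cons q t ih =>
    intro R h x
    exact le_trans (ih (cholStepM_psd h q) x) (cholStepM_qf_le h q x)

lemma foldl_diag_le {m : ℕ} (ps : List (Fin m)) :
    ∀ {R : Matrix (Fin m) (Fin m) ℝ}, R.PosSemidef → ∀ i : Fin m,
      (ps.foldl cholStepM R) i i ≤ R i i := by
  induction ps with
  | nil => intro R _ i; simp
  | cons q t ih =>
    intro R h i
    exact le_trans (ih (cholStepM_psd h q) i) (cholStepM_diag_le h q i)

lemma foldl_col_zero' {m : ℕ} (ps : List (Fin m)) (p : Fin m) :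
    ∀ {R : Matrix (Fin m) (Fin m) ℝ}, (∀ i, R i p = 0) → ∀ i,
      (ps.foldl cholStepM R) i p = 0 := by
  induction ps with
  | nil => intro R hz i; simpa using hz i
  | cons q t ih =>
    intro R hz i
    exact ih (fun j => cholStepM_col_zero' p hz q j) i

lemma foldl_col_zero {m : ℕ} (ps : List (Fin m)) (p : Fin m) :
    ∀ {R : Matrix (Fin m) (Fin m) ℝ}, R.PosSemidef → p ∈ ps → ∀ i,
      (ps.foldl cholStepM R) i p = 0 := by
  induction ps with
  | nil => intro R _ hmem; simp at hmem
  | cons q t ih =>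
    intro R h hmem i
    rcases List.mem_cons.mp hmem with rfl | hmem'
    · exact foldl_col_zero' t p (fun j => cholStepM_col_zero h p j) i
    · exact ih (cholStepM_psd h q) hmem' i

lemma pigeonholeZ {m n : ℕ} (hn1 : 1 < n) (hnm : n ≤ m) (p : Fin n → Fin m) :
    ∃ a b : Fin n, a < b ∧ ((n : ℤ) - 1) * |((p a : ℤ)) - ((p b : ℤ))| ≤ (m : ℤ) - 1 := by
  by_contra hcon
  push_neg at hcon
  -- first: for any a ≠ b the same strict inequality holds
  have hcon' : ∀ a b : Fin n, a ≠ b → (m : ℤ) - 1 < ((n : ℤ) - 1) * |((p a : ℤ)) - ((p b : ℤ))| := by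
    intro a b hab
    rcases lt_or_gt_of_ne hab with h | h
    · exact hcon a b h
    · rw [abs_sub_comm]; exact hcon b a h
  have hm2 : 2 ≤ m := le_trans hn1 hnm
  have hinj : Function.Injective p := by
    intro a b hab
    by_contra hne
    have := hcon' a b hne
    rw [hab, sub_self, abs_zero, mul_zero] at this
    have : (2:ℤ) ≤ (m:ℤ) := by exact_mod_cast hm2
    omega
  set s : Finset (Fin m) := Finset.image p Finset.univ with hs
  have hcard : s.card = n := by
    rw [hs, Finset.card_image_of_injective _ hinj, Finset.card_univ, Fintype.card_fin]
  set f := s.orderIsoOfFin hcard with hf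
  set g : ℕ → ℤ := fun k => if h : k < n then ((f ⟨k, h⟩ : Fin m) : ℤ) else 0 with hg
  -- each gap is at least of size guaranteeing contradiction
  have hgap : ∀ k ∈ Finset.range (n - 1), (m : ℤ) ≤ ((n : ℤ) - 1) * (g (k + 1) - g k) := by
    intro k hk
    rw [Finset.mem_range] at hk
    have hk1 : k + 1 < n := by omega
    have hk0 : k < n := by omega
    have hlt : (f ⟨k, hk0⟩ : Fin m) < (f ⟨k + 1, hk1⟩ : Fin m) := by
      have : (⟨k, hk0⟩ : Fin n) < ⟨k + 1, hk1⟩ := by simp [Fin.mk_lt_mk]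
      exact f.strictMono this
    obtain ⟨a, _, ha⟩ := Finset.mem_image.mp (f ⟨k, hk0⟩).2
    obtain ⟨b, _, hb⟩ := Finset.mem_image.mp (f ⟨k + 1, hk1⟩).2
    have hne : a ≠ b := by
      intro h; rw [h, hb] at ha
      exact absurd ha.symm (ne_of_lt hlt)
    have hval : ((p b : ℤ)) - ((p a : ℤ)) = g (k + 1) - g k := by
      rw [hg]; simp only [dif_pos hk1, dif_pos hk0, ha, hb]
    have habs : |((p a : ℤ)) - ((p b : ℤ))| = g (k + 1) - g k := by
      rw [abs_sub_comm, ← hval]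
      apply abs_of_nonneg
      have : ((p a : ℤ)) < ((p b : ℤ)) := by
        rw [ha, hb]; exact_mod_cast hlt
      omega
    have := hcon' a b hne
    rw [habs] at this
    omega
  have hsum := Finset.sum_range_sub g (n - 1)
  have hsum2 : ((n : ℤ) - 1) * (g (n - 1) - g 0) =
      ∑ k ∈ Finset.range (n - 1), ((n : ℤ) - 1) * (g (k + 1) - g k) := by
    rw [← Finset.mul_sum, hsum]
  have hlb : ∑ k ∈ Finset.range (n - 1), (m : ℤ) ≤
      ∑ k ∈ Finset.range (n - 1), ((n : ℤ) - 1) * (g (k + 1) - g k) :=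
    Finset.sum_le_sum hgap
  rw [Finset.sum_const, Finset.card_range, nsmul_eq_mul] at hlb
  rw [← hsum2] at hlb
  have hcast : ((n - 1 : ℕ) : ℤ) = (n : ℤ) - 1 := by
    have : 1 ≤ n := le_of_lt hn1; push_cast [this]; ring
  rw [hcast] at hlb
  -- bounds on g
  have hn1' : n - 1 < n := by omega
  have hub : g (n - 1) ≤ (m : ℤ) - 1 := by
    rw [hg]; simp only [dif_pos hn1']
    have : ((f ⟨n - 1, hn1'⟩ : Fin m) : ℕ) < m := (f ⟨n - 1, hn1'⟩ : Fin m).2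
    omega
  have hlbg : 0 ≤ g 0 := by
    rw [hg]; simp only [dif_pos (by omega : 0 < n)]
    positivity
  have hnn : (2:ℤ) ≤ (n:ℤ) := by exact_mod_cast hn1
  nlinarith [hlb, hub, hlbg, hnn]

theorem matrix_complete_pivoting_convergence {m n : ℕ} (hn1 : 1 < n) (hnm : n ≤ m)
    (A : Matrix (Fin m) (Fin m) ℝ) (hA : A.PosDef)
    (G : ℝ)
    -- `G` is the discrete diagonal Lipschitz constant `G_A = max_{i≠j} |A i i - A i j| / |i - j|`
    (hG : ∀ i j : Fin m, i ≠ j → |A i i - A i j| ≤ G * |(i : ℝ) - (j : ℝ)|)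
    (hGle : ∃ i j : Fin m, i ≠ j ∧ |A i i - A i j| = G * |(i : ℝ) - (j : ℝ)|)
    (p : Fin n → Fin m)
    -- complete pivoting: at each step the pivot index maximizes the diagonal of the residual
    (hcp : ∀ k : Fin n, ∀ i : Fin m,
      cholResidM A ((List.ofFn p).take k) i i ≤
        cholResidM A ((List.ofFn p).take k) (p k) (p k)) :
    ∀ i j : Fin m,
      |cholResidM A (List.ofFn p) i j| ≤ 4 * ((m : ℝ) - 1) * G / ((n : ℝ) - 1) := by
  intro i j
  have hApsd : A.PosSemidef := hA.posSemidef
  have hG0 : 0 ≤ G := by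
    obtain ⟨i0, j0, hne, heq⟩ := hGle
    have hd0 : 0 < |(i0 : ℝ) - (j0 : ℝ)| := by
      rw [abs_pos, sub_ne_zero]
      intro h
      apply hne
      have : (i0 : ℕ) = (j0 : ℕ) := by exact_mod_cast h
      exact Fin.ext this
    nlinarith [abs_nonneg (A i0 i0 - A i0 j0), heq]
  obtain ⟨a, b, hab, hd⟩ := pigeonholeZ hn1 hnm p
  set d : ℝ := |((p a) : ℝ) - ((p b) : ℝ)| with hdd
  have hd0 : 0 ≤ d := abs_nonneg _
  have hdR : ((n : ℝ) - 1) * d ≤ (m : ℝ) - 1 := by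
    rw [hdd]
    exact_mod_cast hd
  set L := List.ofFn p with hL
  set tk := L.take ((b : ℕ)) with htk
  -- p a is a member of the prefix
  have hmem : p a ∈ tk := by
    have h1 : (a : ℕ) < L.length := by rw [hL, List.length_ofFn]; exact a.2
    have h2 : (a : ℕ) < (b : ℕ) := hab
    have h3 : (a : ℕ) < tk.length := by
      rw [htk, List.length_take]
      exact lt_min h2 h1
    have h4 : tk[(a : ℕ)] = p a := by
      simp [htk, hL, List.getElem_take, List.getElem_ofFn]
    rw [← h4]
    exact List.getElem_mem h3
  set Rb := tk.foldl cholStepM A with hRb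
  have hRbpsd : Rb.PosSemidef := foldl_psd tk hApsd
  have hcol : ∀ i, Rb i (p a) = 0 := foldl_col_zero tk (p a) hApsd hmem
  set x : Fin m → ℝ := Pi.single (p b) 1 - Pi.single (p a) 1 with hx
  have expand : ∀ M : Matrix (Fin m) (Fin m) ℝ, x ⬝ᵥ M.mulVec x =
      M (p b) (p b) - M (p b) (p a) - M (p a) (p b) + M (p a) (p a) := by
    intro M
    rw [hx]
    simp only [mulVec_sub, dotProduct_sub, sub_dotProduct]
    rw [qf_single, qf_single, qf_single, qf_single]
    ring
  have e3 : x ⬝ᵥ Rb.mulVec x = Rb (p b) (p b) := by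
    rw [expand, hcol (p b), hcol (p a), psd_apply_symm hRbpsd (p a) (p b), hcol (p b)]
    ring
  -- key diagonal bound at the pivot p b
  have hkey : Rb (p b) (p b) ≤ 2 * G * d := by
    rcases eq_or_ne (p a) (p b) with heq | hne
    · have : Rb (p b) (p b) = 0 := by rw [← heq] at *; exact hcol (p a)
      rw [this, hdd, heq]
      simp
    · have hle1 : x ⬝ᵥ Rb.mulVec x ≤ x ⬝ᵥ A.mulVec x := foldl_qf_le tk hApsd x
      rw [e3, expand A] at hle1
      have h1 := hG (p b) (p a) hne.symm
      have h2 := hG (p a) (p b) hne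
      have hsym : A (p a) (p b) = A (p b) (p a) := psd_apply_symm hApsd _ _
      have habs1 : A (p b) (p b) - A (p b) (p a) ≤ G * |((p b) : ℝ) - ((p a) : ℝ)| :=
        le_trans (le_abs_self _) h1
      have habs2 : A (p a) (p a) - A (p a) (p b) ≤ G * |((p a) : ℝ) - ((p b) : ℝ)| :=
        le_trans (le_abs_self _) h2
      have hcomm : |((p b) : ℝ) - ((p a) : ℝ)| = d := by rw [hdd, abs_sub_comm]
      rw [hcomm] at habs1
      rw [← hdd] at habs2
      linarith
  -- complete pivoting at step b
  have hcpb := hcp b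
  simp only [cholResidM] at hcpb
  rw [← htk, ← hRb] at hcpb
  -- the final residual
  set Rn := L.foldl cholStepM A with hRn
  have hsplit : Rn = (L.drop ((b : ℕ))).foldl cholStepM Rb := by
    rw [hRn, hRb, htk, ← List.foldl_append, List.take_append_drop]
  have hRnpsd : Rn.PosSemidef := foldl_psd L hApsd
  have hdn : ∀ i, Rn i i ≤ Rb i i := by
    intro i
    rw [hsplit]
    exact foldl_diag_le _ hRbpsd i
  set D : ℝ := 2 * G * d with hD
  have hD0 : 0 ≤ D := by positivity
  have hDi : Rn i i ≤ D := le_trans (hdn i) (le_trans (hcpb i) hkey)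
  have hDj : Rn j j ≤ D := le_trans (hdn j) (le_trans (hcpb j) hkey)
  have hsq : (Rn i j) ^ 2 ≤ Rn i i * Rn j j := psd_entry_sq_le hRnpsd i j
  have habs : |Rn i j| ≤ D := by
    nlinarith [abs_nonneg (Rn i j), sq_abs (Rn i j), psd_diag_nonneg hRnpsd i,
      psd_diag_nonneg hRnpsd j]
  have hgoal : cholResidM A L i j = Rn i j := rfl
  rw [hgoal]
  have hn2 : (2 : ℝ) ≤ (n : ℝ) := by exact_mod_cast hn1
  have hm2 : (2 : ℝ) ≤ (m : ℝ) := by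
    have : 2 ≤ m := le_trans hn1 hnm
    exact_mod_cast this
  have hnpos : 0 < (n : ℝ) - 1 := by linarith
  rw [le_div_iff₀ hnpos]
  have step1 : |Rn i j| * ((n : ℝ) - 1) ≤ D * ((n : ℝ) - 1) :=
    mul_le_mul_of_nonneg_right habs (le_of_lt hnpos)
  have step2 : D * ((n : ℝ) - 1) = 2 * G * (((n : ℝ) - 1) * d) := by rw [hD]; ring
  have step3 : 2 * G * (((n : ℝ) - 1) * d) ≤ 2 * G * ((m : ℝ) - 1) :=
    mul_le_mul_of_nonneg_left hdR (by linarith)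
  have step4 : 2 * G * ((m : ℝ) - 1) ≤ 4 * ((m : ℝ) - 1) * G := by nlinarith
  linarith [step1, step2.le, step3, step4, step2.ge]
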